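/- arXiv:1506.02740 — 4 statements merged into one kernel-verified Lean document; each statement's English description precedes it below -/
import Mathlib

section
/- Any sequence of permutations in S_n obtained from an even permutation by repeatedly applying push-to-the-top operations t_i with odd indices i consists entirely of even permutations, and hence any cyclic Gray code using only odd-index push-to-the-top operations is a snake-in-the-box code under Kendall's τ-metric (all pairwise Kendall distances are at least 2). -/
def adjTranspositions (n : ℕ) : Set (Equiv.Perm (Fin n)) :=
  {s | ∃ i j : Fin n, (j : ℕ) = (i : ℕ) + 1 ∧ s = Equiv.swap i j}

/-- Kendall's τ-distance on `S_n`. -/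
noncomputable def kendall {n : ℕ} (σ π : Equiv.Perm (Fin n)) : ℕ :=
  sInf {k | ∃ l : List (Equiv.Perm (Fin n)), l.length = k ∧
    (∀ s ∈ l, s ∈ adjTranspositions n) ∧ σ * l.prod = π}

/-- Push-to-the-top operation `t_{i+1}` (1-indexed): move the entry at 0-indexed
position `i` to the front. -/
def pushToTop {n : ℕ} (i : Fin n) (π : Equiv.Perm (Fin n)) : Equiv.Perm (Fin n) :=
  π * (Fin.cycleRange i)⁻¹

lemma adj_sign {n : ℕ} {s : Equiv.Perm (Fin n)} (hs : s ∈ adjTranspositions n) :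
    Equiv.Perm.sign s = -1 := by
  obtain ⟨i, j, hij, rfl⟩ := hs
  have : i ≠ j := by
    intro h; subst h; omega
  exact Equiv.Perm.sign_swap this

lemma adj_nonempty {n : ℕ} {σ π : Equiv.Perm (Fin n)} (hne : σ ≠ π) :
    {k | ∃ l : List (Equiv.Perm (Fin n)), l.length = k ∧
      (∀ s ∈ l, s ∈ adjTranspositions n) ∧ σ * l.prod = π}.Nonempty := by
  cases n with
  | zero => exact absurd (Subsingleton.elim σ π) hne
  | succ m =>
    have : σ⁻¹ * π ∈ Submonoid.closure
        (Set.range fun i : Fin m ↦ Equiv.swap i.castSucc i.succ) := by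
      rw [Equiv.Perm.mclosure_swap_castSucc_succ]; trivial
    obtain ⟨l, hl, hprod⟩ := Submonoid.exists_list_of_mem_closure this
    refine ⟨l.length, l, rfl, ?_, ?_⟩
    · intro s hs
      obtain ⟨i, rfl⟩ := hl s hs
      exact ⟨i.castSucc, i.succ, by simp, rfl⟩
    · rw [hprod, mul_inv_cancel_left]

/-- A sequence obtained from an even permutation using only push-to-the-top operations on
odd (1-indexed) indices consists of even permutations, and any two distinct permutations
in it are at Kendall's τ-distance at least 2. -/
theorem stmt_3 {n : ℕ} (c : ℕ → Equiv.Perm (Fin n)) (idx : ℕ → Fin n)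
    (h0 : Equiv.Perm.sign (c 0) = 1)
    (hstep : ∀ k, c (k + 1) = pushToTop (idx k) (c k))
    (hodd : ∀ k, Odd ((idx k : ℕ) + 1)) :
    (∀ k, Equiv.Perm.sign (c k) = 1) ∧
    (∀ k l, c k ≠ c l → 2 ≤ kendall (c k) (c l)) := by
  have hsign : ∀ k, Equiv.Perm.sign (c k) = 1 := by
    intro k
    induction k with
    | zero => exact h0
    | succ k ih =>
      have he : Even ((idx k : ℕ)) := by
        have := hodd k
        rcases Nat.even_or_odd (idx k : ℕ) with h | h
        · exact h
        · exact absurd this (by simp [Nat.even_add_one, Nat.not_even_iff_odd.2 h])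
      rw [hstep k, pushToTop, map_mul, map_inv, Fin.sign_cycleRange, ih,
        he.neg_one_pow]
      simp
  refine ⟨hsign, fun k l hne ↦ ?_⟩
  have hmem : ∀ m ∈ {k' | ∃ L : List (Equiv.Perm (Fin n)), L.length = k' ∧
      (∀ s ∈ L, s ∈ adjTranspositions n) ∧ c k * L.prod = c l}, 2 ≤ m := by
    rintro m ⟨L, rfl, hL, hprod⟩
    match L, hL, hprod with
    | [], _, hprod => simp at hprod; exact absurd hprod hne
    | [s], hL, hprod =>
      exfalso
      have := hsign l
      rw [← hprod, map_mul, hsign k] at this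
      simp [adj_sign (hL s (by simp))] at this
    | s :: t :: L, _, _ => simp
  exact le_csInf (adj_nonempty hne) hmem
end

section
/- More generally, for every n ≥ 3 and every permutation π ∈ S_{2n+1}, t_{2n-3}⁻¹ ∘ t_{2n-1} ∘ t_{2n-3}⁻¹ (π) = t_{2n-1}⁻¹ ∘ t_{2n-3} ∘ t_{2n-1}⁻¹ (π). -/
/-- The inverse of the push-to-the-top operation `t_{i+1}`. -/
def pushToTopInv {n : ℕ} (i : Fin n) (π : Equiv.Perm (Fin n)) : Equiv.Perm (Fin n) :=
  π * Fin.cycleRange i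

lemma crval {N k : ℕ} (hk : k < N + 1) (y : Fin (N + 1)) :
    ((Fin.cycleRange ⟨k, hk⟩ y : Fin (N + 1)) : ℕ)
      = if (y : ℕ) < k then (y : ℕ) + 1 else if (y : ℕ) = k then 0 else (y : ℕ) := by
  rcases lt_trichotomy (y : ℕ) k with h | h | h
  · rw [Fin.coe_cycleRange_of_lt (by exact h), if_pos h]
  · rw [if_neg (by omega), if_pos h]
    have : y = ⟨k, hk⟩ := Fin.ext h
    rw [this, Fin.cycleRange_self, Fin.val_zero]
  · rw [Fin.cycleRange_of_gt (by exact h), if_neg (by omega), if_neg (by omega)]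

lemma crsymm {N k : ℕ} (hk : k < N + 1) (y : Fin (N + 1)) :
    (((Fin.cycleRange ⟨k, hk⟩).symm y : Fin (N + 1)) : ℕ)
      = if (y : ℕ) = 0 then k else if (y : ℕ) ≤ k then (y : ℕ) - 1 else (y : ℕ) := by
  have hw : (if (y : ℕ) = 0 then k else if (y : ℕ) ≤ k then (y : ℕ) - 1 else (y : ℕ)) < N + 1 := by
    split_ifs <;> omega
  have h : (Fin.cycleRange ⟨k, hk⟩).symm y = ⟨_, hw⟩ := by
    rw [Equiv.symm_apply_eq]
    refine Fin.ext ?_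
    rw [crval]
    simp only [Fin.val_mk]
    split_ifs <;> omega
  rw [h]

set_option maxHeartbeats 1600000 in
lemma key {N k : ℕ} (hk : k + 2 < N + 1) :
    Fin.cycleRange (⟨k, by omega⟩ : Fin (N + 1)) * (Fin.cycleRange ⟨k + 2, hk⟩)⁻¹ *
        Fin.cycleRange ⟨k, by omega⟩
      = Fin.cycleRange ⟨k + 2, hk⟩ * (Fin.cycleRange (⟨k, by omega⟩ : Fin (N + 1)))⁻¹ *
        Fin.cycleRange ⟨k + 2, hk⟩ := by
  ext x
  simp only [Equiv.Perm.mul_apply, Equiv.Perm.inv_def]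
  simp only [crval, crsymm]
  split_ifs <;> first | omega | exact ((by assumption : False).elim)

/-- For every `n ≥ 3` and `π ∈ S_{2n+1}`:
`t_{2n-3}⁻¹ ∘ t_{2n-1} ∘ t_{2n-3}⁻¹ (π) = t_{2n-1}⁻¹ ∘ t_{2n-3} ∘ t_{2n-1}⁻¹ (π)`
(1-indexed `t_{2n-3} = pushToTop ⟨2n-4⟩`, `t_{2n-1} = pushToTop ⟨2n-2⟩`). -/
theorem stmt_6 {n : ℕ} (hn : 3 ≤ n) (π : Equiv.Perm (Fin (2 * n + 1))) :
    pushToTopInv ⟨2 * n - 4, by omega⟩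
      (pushToTop ⟨2 * n - 2, by omega⟩ (pushToTopInv ⟨2 * n - 4, by omega⟩ π)) =
    pushToTopInv ⟨2 * n - 2, by omega⟩
      (pushToTop ⟨2 * n - 4, by omega⟩ (pushToTopInv ⟨2 * n - 2, by omega⟩ π)) := by
  have hkey := key (N := 2 * n) (k := 2 * n - 4) (by omega)
  simp only [mul_assoc] at hkey
  simp only [pushToTop, pushToTopInv, mul_assoc]
  simp only [show 2 * n - 2 = 2 * n - 4 + 2 by omega]
  congr 1
end

section
/- Each necklace [α]-[x,y] forms a cyclic Gray code of length 2n-1 using only the push-to-the-top operation t_{2n-1}: applying t_{2n-1} exactly 2n-1 times to any permutation returns it to itself, and the intermediate permutations are exactly the 2n-1 distinct cyclic rotations of the length-(2n-1) prefix with the fixed suffix (x,y). Moreover, this cyclic sequence is a snake-in-the-box code under Kendall's τ-metric. -/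
/-- `t_{2n-1}` on `S_{2n+1}`. -/
def rotPrefix (n : ℕ) : Equiv.Perm (Fin (2 * n + 1)) → Equiv.Perm (Fin (2 * n + 1)) :=
  pushToTop ⟨2 * n - 2, by omega⟩

section Aux

open Equiv Equiv.Perm

/-- The underlying cycle. -/
def cyc (n : ℕ) : Equiv.Perm (Fin (2 * n + 1)) :=
  Fin.cycleRange ⟨2 * n - 2, by omega⟩

lemma rotPrefix_eq (n : ℕ) (π : Equiv.Perm (Fin (2 * n + 1))) :
    rotPrefix n π = π * (cyc n)⁻¹ := rfl

lemma rotPrefix_iterate (n : ℕ) (π : Equiv.Perm (Fin (2 * n + 1))) (k : ℕ) :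
    (rotPrefix n)^[k] π = π * ((cyc n)⁻¹) ^ k := by
  induction k with
  | zero => simp
  | succ k ih => rw [Function.iterate_succ_apply', ih, rotPrefix_eq, pow_succ, mul_assoc]

lemma cyc_card (n : ℕ) (hn : 2 ≤ n)
    (h0 : (⟨2 * n - 2, by omega⟩ : Fin (2 * n + 1)) ≠ 0) :
    (cyc n).support.card = 2 * n - 1 := by
  show (Fin.cycleRange (⟨2 * n - 2, by omega⟩ : Fin (2 * n + 1))).support.card = 2 * n - 1
  have h2 := Equiv.Perm.sum_cycleType (Fin.cycleRange (⟨2 * n - 2, by omega⟩ : Fin (2 * n + 1)))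
  rw [Fin.cycleType_cycleRange h0, Multiset.sum_singleton] at h2
  simp only [Fin.val_mk] at h2
  omega

lemma cyc_ne_zero (n : ℕ) (hn : 2 ≤ n) :
    (⟨2 * n - 2, by omega⟩ : Fin (2 * n + 1)) ≠ 0 := by
  intro he
  have := congrArg Fin.val he
  simp [Fin.val_zero] at this
  omega

lemma cyc_orderOf (n : ℕ) (hn : 1 ≤ n) : orderOf (cyc n) = 2 * n - 1 := by
  rcases eq_or_lt_of_le hn with h | h
  · have : (⟨2 * n - 2, by omega⟩ : Fin (2 * n + 1)) = 0 := by
      subst h; rfl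
    rw [cyc, this, Fin.cycleRange_zero, orderOf_one]
    omega
  · have h0 := cyc_ne_zero n h
    have hc : (cyc n).IsCycle := Fin.isCycle_cycleRange h0
    rw [hc.orderOf, cyc_card n h h0]

lemma cyc_fix (n : ℕ) (hn : 1 ≤ n) (x : Fin (2 * n + 1)) (hx : 2 * n - 1 ≤ (x : ℕ)) :
    cyc n x = x := by
  apply Fin.cycleRange_of_gt
  simp only [Fin.lt_def]
  omega

/-- A nontrivial power of `cyc n` is not an adjacent transposition. -/
lemma cyc_pow_not_swap (n : ℕ) (hn : 1 ≤ n) (j : ℕ) (hne : (cyc n) ^ j ≠ 1) :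
    (cyc n) ^ j ∉ adjTranspositions (2 * n + 1) := by
  rintro ⟨a, b, hab, hs⟩
  have hab' : a ≠ b := by
    intro h; subst h; omega
  have hn2 : 2 ≤ n := by
    by_contra h
    have hn1 : n = 1 := by omega
    apply hne
    have : (⟨2 * n - 2, by omega⟩ : Fin (2 * n + 1)) = 0 := by
      subst hn1; rfl
    rw [cyc, this, Fin.cycleRange_zero, one_pow]
  have h0 := cyc_ne_zero n hn2
  have hc : (cyc n).IsCycle := Fin.isCycle_cycleRange h0
  have hcard := cyc_card n hn2 h0
  have hex : ∃ x ∈ (cyc n).support, x ≠ a ∧ x ≠ b := by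
    by_contra h
    push_neg at h
    have hsub : (cyc n).support ⊆ {a, b} := by
      intro x hx
      by_cases hxa : x = a
      · simp [hxa]
      · simp [h x hx hxa]
    have := Finset.card_le_card hsub
    have hle : ({a, b} : Finset (Fin (2 * n + 1))).card ≤ 2 :=
      (Finset.card_insert_le _ _).trans (by simp)
    omega
  obtain ⟨x, hx, hxa, hxb⟩ := hex
  have hmx : cyc n x ≠ x := Equiv.Perm.mem_support.mp hx
  have hfix : ((cyc n) ^ j) x = x := by
    rw [hs]
    exact Equiv.swap_apply_of_ne_of_ne hxa hxb
  exact hne ((hc.pow_eq_one_iff' hmx).mpr hfix)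

end Aux

open Equiv Equiv.Perm in
/-- A necklace is a cyclic Gray code of length `2n-1` under `t_{2n-1}`: applying `t_{2n-1}`
`2n-1` times returns to the start, the intermediate permutations are distinct, they all have
the same (fixed) last two entries, and the sequence is a snake-in-the-box code under
Kendall's τ-metric. -/
theorem stmt_9 (n : ℕ) (hn : 1 ≤ n) (π : Equiv.Perm (Fin (2 * n + 1))) :
    (rotPrefix n)^[2 * n - 1] π = π ∧
    (∀ k l : ℕ, k < 2 * n - 1 → l < 2 * n - 1 →
      (rotPrefix n)^[k] π = (rotPrefix n)^[l] π → k = l) ∧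
    (∀ k : ℕ, (rotPrefix n)^[k] π ⟨2 * n - 1, by omega⟩ = π ⟨2 * n - 1, by omega⟩ ∧
      (rotPrefix n)^[k] π ⟨2 * n, by omega⟩ = π ⟨2 * n, by omega⟩) ∧
    (∀ k l : ℕ, (rotPrefix n)^[k] π ≠ (rotPrefix n)^[l] π →
      2 ≤ kendall ((rotPrefix n)^[k] π) ((rotPrefix n)^[l] π)) := by
  have hord := cyc_orderOf n hn
  refine ⟨?_, ?_, ?_, ?_⟩
  · rw [rotPrefix_iterate, inv_pow, ← hord, pow_orderOf_eq_one, inv_one, mul_one]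
  · intro k l hk hl he
    rw [rotPrefix_iterate, rotPrefix_iterate] at he
    have := mul_left_cancel he
    rw [inv_pow, inv_pow, inv_inj, pow_eq_pow_iff_modEq, hord] at this
    have h1 : k % (2 * n - 1) = k := Nat.mod_eq_of_lt hk
    have h2 : l % (2 * n - 1) = l := Nat.mod_eq_of_lt hl
    rwa [Nat.ModEq, h1, h2] at this
  · intro k
    have hfix : ∀ x : Fin (2 * n + 1), 2 * n - 1 ≤ (x : ℕ) →
        (((cyc n)⁻¹) ^ k) x = x := by
      intro x hx
      apply Equiv.Perm.pow_apply_eq_self_of_apply_eq_self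
      exact Equiv.Perm.inv_eq_iff_eq.mpr (cyc_fix n hn x hx).symm
    constructor <;>
    · rw [rotPrefix_iterate, Equiv.Perm.mul_apply, hfix]
      simp only [Fin.val_mk]
      omega
  · intro k l hne
    rw [rotPrefix_iterate, rotPrefix_iterate] at hne ⊢
    set σ := π * ((cyc n)⁻¹) ^ k with hσ
    set τ := π * ((cyc n)⁻¹) ^ l with hτ
    have horpos : 0 < orderOf (cyc n) := by omega
    obtain ⟨m, hm⟩ : ∃ m, orderOf (cyc n) = m + 1 := ⟨orderOf (cyc n) - 1, by omega⟩
    have hinv : ((cyc n)⁻¹) ^ l = (cyc n) ^ (l * (orderOf (cyc n) - 1)) := by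
      rw [inv_pow]
      apply inv_eq_of_mul_eq_one_right
      rw [← pow_add, hm]
      have h1 : l + l * (m + 1 - 1) = (m + 1) * l := by
        simp only [Nat.add_sub_cancel]; ring
      rw [h1, pow_mul, ← hm, pow_orderOf_eq_one, one_pow]
    have hδ : σ⁻¹ * τ = cyc n ^ (k + l * (orderOf (cyc n) - 1)) := by
      rw [hσ, hτ, mul_inv_rev, mul_assoc, inv_mul_cancel_left, hinv, inv_pow, inv_inv,
        ← pow_add]
    have hδne : σ⁻¹ * τ ≠ 1 := fun h => hne (inv_mul_eq_one.mp h)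
    have hmem : σ⁻¹ * τ ∈ Submonoid.closure
        (Set.range fun i : Fin (2 * n) => Equiv.swap i.castSucc i.succ) := by
      rw [Equiv.Perm.mclosure_swap_castSucc_succ]
      trivial
    obtain ⟨L, hLmem, hLprod⟩ := Submonoid.exists_list_of_mem_closure hmem
    have hS : Set.Nonempty {k' | ∃ l' : List (Equiv.Perm (Fin (2 * n + 1))),
        l'.length = k' ∧ (∀ s ∈ l', s ∈ adjTranspositions (2 * n + 1)) ∧
        σ * l'.prod = τ} := by
      refine ⟨L.length, L, rfl, ?_, ?_⟩
      · intro s hs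
        obtain ⟨i, hi⟩ := hLmem s hs
        exact ⟨i.castSucc, i.succ, by simp, hi.symm⟩
      · rw [hLprod, mul_inv_cancel_left]
    unfold kendall
    have hks := Nat.sInf_mem hS
    obtain ⟨L', hlen, hadj, hprod⟩ := hks
    by_contra hlt
    push_neg at hlt
    rw [← hlen] at hlt
    match L', hadj, hprod, hlt with
    | [], hadj, hprod, hlt =>
      exact hne (by simpa using hprod)
    | [s], hadj, hprod, hlt =>
      have hsδ : s = σ⁻¹ * τ := by
        rw [← hprod]
        simp [inv_mul_cancel_left]
      refine cyc_pow_not_swap n hn (k + l * (orderOf (cyc n) - 1)) ?_ ?_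
      · rw [← hδ]; exact hδne
      · rw [← hδ, ← hsδ]
        exact hadj s (by simp)
    | s :: t :: r, hadj, hprod, hlt =>
      simp only [List.length_cons] at hlt; omega
end

section
/- There exists a tree (a connected, acyclic subhypergraph in the sense that adding edges one at a time each new edge meets the previously covered vertex set in exactly one vertex) in the hypergraph H_{2n+1} covering all 2n(2n+1) vertices except the vertex (2,1): concretely, the recursive edge set consisting of T_5 = {⟨1,2,3⟩,⟨1,2,4⟩,⟨1,2,5⟩,⟨1,5,3⟩,⟨2,3,5⟩,⟨1,3,4⟩,⟨2,4,3⟩,⟨1,4,5⟩,⟨2,5,4⟩} together with, for each m from 3 to n, the edges ⟨x,x+1,2m⟩ and ⟨x,x+1,2m+1⟩ for 2 ≤ x ≤ 2m-2, and ⟨1,2,2m⟩, ⟨1,2m,2m-1⟩, ⟨1,2m+1,2m-1⟩, ⟨1,2m,2m+1⟩, ⟨2,2m+1,2m⟩, covers exactly the vertex set V \ {(2,1)}. -/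
/-- The three vertices of the hyperedge `⟨x,y,z⟩` of `H_{2n+1}` given by an ordered
triple `e = (x,y,z)`: namely `(x,y)`, `(y,z)` and `(z,x)`. -/
def edgeVerts {m : ℕ} (e : Fin m × Fin m × Fin m) : Finset (Fin m × Fin m) :=
  {(e.1, e.2.1), (e.2.1, e.2.2), (e.2.2, e.1)}

/-- The set of vertices covered by a list of hyperedges. -/
def covered {m : ℕ} (es : List (Fin m × Fin m × Fin m)) : Finset (Fin m × Fin m) :=
  es.foldr (fun e s => edgeVerts e ∪ s) ∅

namespace Stmt13

def eV (e : ℕ × ℕ × ℕ) : Finset (ℕ × ℕ) := {(e.1, e.2.1), (e.2.1, e.2.2), (e.2.2, e.1)}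

lemma mem_eV {p : ℕ × ℕ} {x y z : ℕ} :
    p ∈ eV (x, y, z) ↔ p = (x, y) ∨ p = (y, z) ∨ p = (z, x) := by
  simp [eV]

def cov (es : List (ℕ × ℕ × ℕ)) : Finset (ℕ × ℕ) := es.foldr (fun e s => eV e ∪ s) ∅

@[simp] lemma cov_nil : cov [] = ∅ := rfl
@[simp] lemma cov_cons (e es) : cov (e :: es) = eV e ∪ cov es := rfl

lemma cov_append (l1 l2 : List (ℕ × ℕ × ℕ)) : cov (l1 ++ l2) = cov l1 ∪ cov l2 := by
  induction l1 with
  | nil => simp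
  | cons e t ih => simp [ih, Finset.union_assoc]

lemma mem_cov {p : ℕ × ℕ} {es : List (ℕ × ℕ × ℕ)} : p ∈ cov es ↔ ∃ e ∈ es, p ∈ eV e := by
  induction es with
  | nil => simp
  | cons e t ih => simp [ih]

def ok : Finset (ℕ × ℕ) → List (ℕ × ℕ × ℕ) → Prop
  | _, [] => True
  | s, e :: es => (eV e ∩ s).card = 1 ∧ ok (eV e ∪ s) es

@[simp] lemma ok_nil (s) : ok s [] := trivial
lemma ok_cons {s e es} : ok s (e :: es) ↔ (eV e ∩ s).card = 1 ∧ ok (eV e ∪ s) es := Iff.rfl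

lemma ok_congr {s t : Finset (ℕ × ℕ)} (h : s = t) {l} : ok s l ↔ ok t l := by rw [h]

lemma ok_append {l1 l2} {s : Finset (ℕ × ℕ)} :
    ok s (l1 ++ l2) ↔ ok s l1 ∧ ok (cov l1 ∪ s) l2 := by
  induction l1 generalizing s with
  | nil => simp [ok]
  | cons e t ih =>
    simp only [List.cons_append, ok_cons, ih, cov_cons, and_assoc]
    constructor
    · rintro ⟨h1, h2, h3⟩
      exact ⟨h1, h2, (ok_congr (by ac_rfl)).mp h3⟩
    · rintro ⟨h1, h2, h3⟩
      exact ⟨h1, h2, (ok_congr (by ac_rfl)).mpr h3⟩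

def pairSet (N : ℕ) : Finset (ℕ × ℕ) :=
  ((Finset.range N ×ˢ Finset.range N).filter fun p => p.1 ≠ p.2) \ {(1, 0)}

lemma mem_pairSet {p : ℕ × ℕ} {N : ℕ} :
    p ∈ pairSet N ↔ (p.1 < N ∧ p.2 < N ∧ p.1 ≠ p.2 ∧ p ≠ (1, 0)) := by
  obtain ⟨u, v⟩ := p
  simp only [pairSet, Finset.mem_sdiff, Finset.mem_filter, Finset.mem_product,
    Finset.mem_range, Finset.mem_singleton]
  tauto

lemma ok_get {s : Finset (ℕ × ℕ)} {es : List (ℕ × ℕ × ℕ)} (h : ok s es) :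
    ∀ k (hk : k < es.length), (eV (es.get ⟨k, hk⟩) ∩ (cov (es.take k) ∪ s)).card = 1 := by
  induction es generalizing s with
  | nil => intro k hk; simp at hk
  | cons e t ih =>
    intro k hk
    match k with
    | 0 => simpa using h.1
    | (k + 1) =>
      have := ih h.2 k (by simpa using Nat.lt_of_succ_lt_succ hk)
      simp only [List.take_succ_cons, List.get_cons_succ, cov_cons]
      rw [show eV e ∪ cov (List.take k t) ∪ s = cov (List.take k t) ∪ (eV e ∪ s) by ac_rfl]
      exact this


def chain (a k : ℕ) : List (ℕ × ℕ × ℕ) := (List.range k).map fun i => (i + 1, i + 2, a)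

lemma mem_cov_chain {p : ℕ × ℕ} {a k : ℕ} :
    p ∈ cov (chain a k) ↔ ∃ i < k, p = (i + 1, i + 2) ∨ p = (i + 2, a) ∨ p = (a, i + 1) := by
  simp [chain, mem_cov, mem_eV]

lemma card_inter_one {p : ℕ × ℕ} {e : ℕ × ℕ × ℕ} {s : Finset (ℕ × ℕ)}
    (h1 : p ∈ eV e) (h2 : p ∈ s) (h3 : ∀ q ∈ eV e, q ∈ s → q = p) :
    (eV e ∩ s).card = 1 := by
  have : eV e ∩ s = {p} := by
    apply Finset.ext
    intro q
    simp only [Finset.mem_inter, Finset.mem_singleton]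
    constructor
    · rintro ⟨hq1, hq2⟩; exact h3 q hq1 hq2
    · rintro rfl; exact ⟨h1, h2⟩
  rw [this, Finset.card_singleton]

lemma chain_ok {a k : ℕ} {s : Finset (ℕ × ℕ)} (ha : k + 2 ≤ a)
    (h1 : ∀ x, 1 ≤ x → x ≤ k → (x, x + 1) ∈ s)
    (h2 : ∀ x, 1 ≤ x → x ≤ k → (x + 1, a) ∉ s)
    (h3 : ∀ x, 1 ≤ x → x ≤ k → (a, x) ∉ s) :
    ok s (chain a k) := by
  induction k with
  | zero => simp [chain]
  | succ k ih =>
    have hstep : chain a (k + 1) = chain a k ++ [(k + 1, k + 2, a)] := by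
      simp [chain, List.range_succ]
    rw [hstep, ok_append]
    refine ⟨ih (by omega) (fun x hx hx' => h1 x hx (by omega))
      (fun x hx hx' => h2 x hx (by omega)) (fun x hx hx' => h3 x hx (by omega)), ?_, trivial⟩
    apply card_inter_one (p := (k + 1, k + 2))
    · exact mem_eV.mpr (Or.inl rfl)
    · exact Finset.mem_union_right _ (h1 (k + 1) (by omega) le_rfl)
    · intro q hq hq'
      rcases mem_eV.mp hq with rfl | rfl | rfl
      · rfl
      · exfalso
        rcases Finset.mem_union.mp hq' with hq' | hq'
        · rcases mem_cov_chain.mp hq' with ⟨i, hi, h | h | h⟩ <;>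
            (rw [Prod.mk.injEq] at h; omega)
        · exact h2 (k + 1) (by omega) le_rfl hq'
      · exfalso
        rcases Finset.mem_union.mp hq' with hq' | hq'
        · rcases mem_cov_chain.mp hq' with ⟨i, hi, h | h | h⟩ <;>
            (rw [Prod.mk.injEq] at h; omega)
        · exact h3 (k + 1) (by omega) le_rfl hq'


lemma mem_pairSet' {u v N : ℕ} :
    (u, v) ∈ pairSet N ↔ u < N ∧ v < N ∧ u ≠ v ∧ ¬(u = 1 ∧ v = 0) := by
  rw [mem_pairSet]
  simp [Prod.ext_iff]

lemma cov_chain_facts {u v a k : ℕ} (h : (u, v) ∈ cov (chain a k)) :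
    (1 ≤ u ∧ u < k + 1 ∧ v = u + 1) ∨ (2 ≤ u ∧ u < k + 2 ∧ v = a) ∨
      (u = a ∧ 1 ≤ v ∧ v < k + 1) := by
  rcases mem_cov_chain.mp h with ⟨i, hi, h | h | h⟩ <;>
    simp only [Prod.mk.injEq] at h <;> omega

def stepL (c : ℕ) : List (ℕ × ℕ × ℕ) :=
  (0, 1, c+1) :: (chain (c+1) (c-1) ++ (0, c+1, c) ::
    (chain (c+2) (c-1) ++ [(0, c+2, c), (0, c+1, c+2), (1, c+2, c+1)]))

lemma s3_bound {c : ℕ} (hc : 4 ≤ c) :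
    ∀ q ∈ eV (0, c+1, c) ∪ (cov (chain (c+1) (c-1)) ∪ (eV (0, 1, c+1) ∪ pairSet (c+1))),
      q.1 ≤ c + 1 ∧ q.2 ≤ c + 1 := by
  rintro ⟨u, v⟩ hq
  rcases Finset.mem_union.mp hq with h | h
  · rcases mem_eV.mp h with h | h | h <;> simp only [Prod.mk.injEq] at h <;> omega
  rcases Finset.mem_union.mp h with h | h
  · have := cov_chain_facts h; omega
  rcases Finset.mem_union.mp h with h | h
  · rcases mem_eV.mp h with h | h | h <;> simp only [Prod.mk.injEq] at h <;> omega
  · have := mem_pairSet'.mp h; omega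

set_option maxHeartbeats 2000000 in
lemma step_ok {c : ℕ} (hc : 4 ≤ c) : ok (pairSet (c+1)) (stepL c) := by
  rw [stepL, ok_cons]
  refine ⟨?_, ?_⟩
  · apply card_inter_one (p := (0, 1)) (mem_eV.mpr (Or.inl rfl))
      (mem_pairSet'.mpr (by omega))
    intro q hq hq'
    rcases mem_eV.mp hq with rfl | rfl | rfl
    · rfl
    · exfalso; have := mem_pairSet'.mp hq'; omega
    · exfalso; have := mem_pairSet'.mp hq'; omega
  rw [ok_append]
  refine ⟨?_, ?_⟩
  · apply chain_ok (by omega)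
    · intro x hx hx'
      apply Finset.mem_union_right
      exact mem_pairSet'.mpr (by omega)
    · intro x hx hx' hq'
      rcases Finset.mem_union.mp hq' with h | h
      · rcases mem_eV.mp h with h | h | h <;> simp only [Prod.mk.injEq] at h <;> omega
      · have := mem_pairSet'.mp h; omega
    · intro x hx hx' hq'
      rcases Finset.mem_union.mp hq' with h | h
      · rcases mem_eV.mp h with h | h | h <;> simp only [Prod.mk.injEq] at h <;> omega
      · have := mem_pairSet'.mp h; omega
  rw [ok_cons]
  refine ⟨?_, ?_⟩
  · apply card_inter_one (p := (c, 0)) (mem_eV.mpr (Or.inr (Or.inr rfl)))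
      (Finset.mem_union_right _
        (Finset.mem_union_right _ (mem_pairSet'.mpr (by omega))))
    intro q hq hq'
    rcases mem_eV.mp hq with rfl | rfl | rfl
    · exfalso
      rcases Finset.mem_union.mp hq' with h | h
      · have := cov_chain_facts h; omega
      rcases Finset.mem_union.mp h with h | h
      · rcases mem_eV.mp h with h | h | h <;> simp only [Prod.mk.injEq] at h <;> omega
      · have := mem_pairSet'.mp h; omega
    · exfalso
      rcases Finset.mem_union.mp hq' with h | h
      · have := cov_chain_facts h; omega
      rcases Finset.mem_union.mp h with h | h
      · rcases mem_eV.mp h with h | h | h <;> simp only [Prod.mk.injEq] at h <;> omega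
      · have := mem_pairSet'.mp h; omega
    · rfl
  rw [ok_append]
  refine ⟨?_, ?_⟩
  · apply chain_ok (by omega)
    · intro x hx hx'
      apply Finset.mem_union_right
      apply Finset.mem_union_right
      apply Finset.mem_union_right
      exact mem_pairSet'.mpr (by omega)
    · intro x hx hx' hq'
      have := s3_bound hc _ hq'
      simp only at this; omega
    · intro x hx hx' hq'
      have := s3_bound hc _ hq'
      simp only at this; omega
  rw [ok_cons]
  refine ⟨?_, ?_⟩
  · apply card_inter_one (p := (c, 0)) (mem_eV.mpr (Or.inr (Or.inr rfl)))
      (Finset.mem_union_right _ (Finset.mem_union_right _ (Finset.mem_union_right _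
        (Finset.mem_union_right _ (mem_pairSet'.mpr (by omega))))))
    intro q hq hq'
    rcases mem_eV.mp hq with rfl | rfl | rfl
    · exfalso
      rcases Finset.mem_union.mp hq' with h | h
      · have := cov_chain_facts h; omega
      · have := s3_bound hc _ h; simp only at this; omega
    · exfalso
      rcases Finset.mem_union.mp hq' with h | h
      · have := cov_chain_facts h; omega
      · have := s3_bound hc _ h; simp only at this; omega
    · rfl
  rw [ok_cons]
  refine ⟨?_, ?_⟩
  · apply card_inter_one (p := (0, c+1)) (mem_eV.mpr (Or.inl rfl))
    · apply Finset.mem_union_right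
      apply Finset.mem_union_right
      exact Finset.mem_union_left _ (mem_eV.mpr (Or.inl rfl))
    intro q hq hq'
    rcases mem_eV.mp hq with rfl | rfl | rfl
    · rfl
    · exfalso
      rcases Finset.mem_union.mp hq' with h | h
      · rcases mem_eV.mp h with h | h | h <;> simp only [Prod.mk.injEq] at h <;> omega
      rcases Finset.mem_union.mp h with h | h
      · have := cov_chain_facts h; omega
      · have := s3_bound hc _ h; simp only at this; omega
    · exfalso
      rcases Finset.mem_union.mp hq' with h | h
      · rcases mem_eV.mp h with h | h | h <;> simp only [Prod.mk.injEq] at h <;> omega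
      rcases Finset.mem_union.mp h with h | h
      · have := cov_chain_facts h; omega
      · have := s3_bound hc _ h; simp only at this; omega
  rw [ok_cons]
  refine ⟨?_, ?_⟩
  · apply card_inter_one (p := (c+1, 1))
      (mem_eV.mpr (Or.inr (Or.inr rfl)))
    · apply Finset.mem_union_right
      apply Finset.mem_union_right
      apply Finset.mem_union_right
      apply Finset.mem_union_right
      apply Finset.mem_union_left
      exact mem_cov_chain.mpr ⟨0, by omega, Or.inr (Or.inr rfl)⟩
    intro q hq hq'
    rcases mem_eV.mp hq with rfl | rfl | rfl
    · exfalso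
      rcases Finset.mem_union.mp hq' with h | h
      · rcases mem_eV.mp h with h | h | h <;> simp only [Prod.mk.injEq] at h <;> omega
      rcases Finset.mem_union.mp h with h | h
      · rcases mem_eV.mp h with h | h | h <;> simp only [Prod.mk.injEq] at h <;> omega
      rcases Finset.mem_union.mp h with h | h
      · have := cov_chain_facts h; omega
      · have := s3_bound hc _ h; simp only at this; omega
    · exfalso
      rcases Finset.mem_union.mp hq' with h | h
      · rcases mem_eV.mp h with h | h | h <;> simp only [Prod.mk.injEq] at h <;> omega
      rcases Finset.mem_union.mp h with h | h
      · rcases mem_eV.mp h with h | h | h <;> simp only [Prod.mk.injEq] at h <;> omega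
      rcases Finset.mem_union.mp h with h | h
      · have := cov_chain_facts h; omega
      · have := s3_bound hc _ h; simp only at this; omega
    · rfl
  exact trivial


lemma eV1 {u v x y z : ℕ} (h1 : u = x) (h2 : v = y) : (u, v) ∈ eV (x, y, z) := by
  subst h1; subst h2; exact mem_eV.mpr (Or.inl rfl)
lemma eV2 {u v x y z : ℕ} (h1 : u = y) (h2 : v = z) : (u, v) ∈ eV (x, y, z) := by
  subst h1; subst h2; exact mem_eV.mpr (Or.inr (Or.inl rfl))
lemma eV3 {u v x y z : ℕ} (h1 : u = z) (h2 : v = x) : (u, v) ∈ eV (x, y, z) := by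
  subst h1; subst h2; exact mem_eV.mpr (Or.inr (Or.inr rfl))

lemma mem_chain {a k i : ℕ} (hi : i < k) : (i + 1, i + 2, a) ∈ chain a k := by
  simp only [chain, List.mem_map, List.mem_range]
  exact ⟨i, hi, rfl⟩

lemma stepL_mem1 {c : ℕ} : (0, 1, c+1) ∈ stepL c := List.mem_cons_self
lemma stepL_mem2 {c : ℕ} : (0, c+1, c) ∈ stepL c := by
  simp [stepL]
lemma stepL_mem3 {c : ℕ} : (0, c+2, c) ∈ stepL c := by
  simp [stepL]
lemma stepL_mem4 {c : ℕ} : (0, c+1, c+2) ∈ stepL c := by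
  simp [stepL]
lemma stepL_mem5 {c : ℕ} : (1, c+2, c+1) ∈ stepL c := by
  simp [stepL]
lemma stepL_chain1 {c i : ℕ} (hi : i < c - 1) : (i + 1, i + 2, c + 1) ∈ stepL c := by
  apply List.mem_cons_of_mem
  exact List.mem_append_left _ (mem_chain hi)
lemma stepL_chain2 {c i : ℕ} (hi : i < c - 1) : (i + 1, i + 2, c + 2) ∈ stepL c := by
  apply List.mem_cons_of_mem
  apply List.mem_append_right
  apply List.mem_cons_of_mem
  exact List.mem_append_left _ (mem_chain hi)

lemma step_cov {c : ℕ} (hc : 4 ≤ c) :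
    pairSet (c+1) ∪ cov (stepL c) = pairSet (c+3) := by
  apply Finset.ext
  rintro ⟨u, v⟩
  rw [mem_pairSet']
  constructor
  · intro h
    rcases Finset.mem_union.mp h with h | h
    · have := mem_pairSet'.mp h; omega
    · rcases mem_cov.mp h with ⟨e, he, hv⟩
      have hb : e.1 < c + 3 ∧ e.2.1 < c + 3 ∧ e.2.2 < c + 3 ∧
          e.1 ≠ e.2.1 ∧ e.2.1 ≠ e.2.2 ∧ e.1 ≠ e.2.2 ∧ ¬(e.1 = 1 ∧ e.2.1 = 0) ∧
          ¬(e.2.1 = 1 ∧ e.2.2 = 0) ∧ ¬(e.2.2 = 1 ∧ e.1 = 0) := by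
        obtain ⟨x, y, z⟩ := e
        simp only [stepL, chain, List.mem_cons, List.mem_append, List.mem_map,
          List.mem_range, Prod.mk.injEq, List.mem_singleton, List.not_mem_nil] at he
        rcases he with ⟨h1, h2, h3⟩ | ⟨⟨i, hi, h1, h2, h3⟩ | ⟨h1, h2, h3⟩ |
          ⟨i, hi, h1, h2, h3⟩ | ⟨h1, h2, h3⟩ | ⟨h1, h2, h3⟩ | ⟨h1, h2, h3⟩⟩ <;>
          simp only at * <;> omega
      obtain ⟨x, y, z⟩ := e
      rcases mem_eV.mp hv with h | h | h <;> simp only [Prod.mk.injEq] at h <;>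
        simp only at hb <;> omega
  · intro h
    by_cases hv1 : v = c + 1
    · subst hv1
      rcases Nat.lt_or_ge u 2 with hu | hu
      · match u, h, hu with
        | 0, h, _ => exact Finset.mem_union_right _ (mem_cov.mpr
            ⟨_, stepL_mem2, eV1 rfl rfl⟩)
        | 1, h, _ => exact Finset.mem_union_right _ (mem_cov.mpr
            ⟨_, stepL_mem1, eV2 rfl rfl⟩)
      · by_cases hu2 : u = c + 2
        · exact Finset.mem_union_right _ (mem_cov.mpr
            ⟨_, stepL_mem5, eV2 (by omega) rfl⟩)
        · exact Finset.mem_union_right _ (mem_cov.mpr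
            ⟨_, stepL_chain1 (show u - 2 < c - 1 by omega), eV2 (by omega) rfl⟩)
    by_cases hv2 : v = c + 2
    · subst hv2
      rcases Nat.lt_or_ge u 2 with hu | hu
      · match u, h, hu with
        | 0, h, _ => exact Finset.mem_union_right _ (mem_cov.mpr
            ⟨_, stepL_mem3, eV1 rfl rfl⟩)
        | 1, h, _ => exact Finset.mem_union_right _ (mem_cov.mpr
            ⟨_, stepL_mem5, eV1 rfl rfl⟩)
      · by_cases hu2 : u = c + 1
        · exact Finset.mem_union_right _ (mem_cov.mpr
            ⟨_, stepL_mem4, eV2 (by omega) rfl⟩)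
        · exact Finset.mem_union_right _ (mem_cov.mpr
            ⟨_, stepL_chain2 (show u - 2 < c - 1 by omega), eV2 (by omega) rfl⟩)
    by_cases hu1 : u = c + 1
    · subst hu1
      by_cases hv0 : v = 0
      · subst hv0
        exact Finset.mem_union_right _ (mem_cov.mpr ⟨_, stepL_mem1, eV3 rfl rfl⟩)
      by_cases hvc : v = c
      · subst hvc
        exact Finset.mem_union_right _ (mem_cov.mpr ⟨_, stepL_mem2, eV2 rfl rfl⟩)
      · exact Finset.mem_union_right _ (mem_cov.mpr
          ⟨_, stepL_chain1 (show v - 1 < c - 1 by omega), eV3 rfl (by omega)⟩)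
    by_cases hu2 : u = c + 2
    · subst hu2
      by_cases hv0 : v = 0
      · subst hv0
        exact Finset.mem_union_right _ (mem_cov.mpr ⟨_, stepL_mem4, eV3 rfl rfl⟩)
      by_cases hvc : v = c
      · subst hvc
        exact Finset.mem_union_right _ (mem_cov.mpr ⟨_, stepL_mem3, eV2 rfl rfl⟩)
      · exact Finset.mem_union_right _ (mem_cov.mpr
          ⟨_, stepL_chain2 (show v - 1 < c - 1 by omega), eV3 rfl (by omega)⟩)
    · exact Finset.mem_union_left _ (mem_pairSet'.mpr (by omega))

lemma step_bounds {c : ℕ} (hc : 4 ≤ c) :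
    ∀ e ∈ stepL c, (e.1 ≠ e.2.1 ∧ e.2.1 ≠ e.2.2 ∧ e.1 ≠ e.2.2) ∧
      e.1 < c + 3 ∧ e.2.1 < c + 3 ∧ e.2.2 < c + 3 := by
  rintro ⟨x, y, z⟩ he
  simp only [stepL, chain, List.mem_cons, List.mem_append, List.mem_map,
    List.mem_range, Prod.mk.injEq, List.mem_singleton, List.not_mem_nil] at he
  rcases he with ⟨h1, h2, h3⟩ | ⟨i, hi, h1, h2, h3⟩ | ⟨h1, h2, h3⟩ |
    ⟨i, hi, h1, h2, h3⟩ | ⟨h1, h2, h3⟩ | ⟨h1, h2, h3⟩ | ⟨h1, h2, h3⟩ | hF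
  all_goals first
  | exact hF.elim
  | (dsimp only; omega)


@[simp] lemma ok_nil_iff (s : Finset (ℕ × ℕ)) : ok s [] ↔ True := iff_of_true trivial trivial

def T5 : List (ℕ × ℕ × ℕ) :=
  [(0,1,2),(0,1,3),(0,1,4),(0,4,2),(1,2,4),(0,2,3),(1,3,2),(0,3,4),(1,4,3)]

lemma build : ∀ n, 2 ≤ n → ∃ l : List (ℕ × ℕ × ℕ),
    (∀ e ∈ l, (e.1 ≠ e.2.1 ∧ e.2.1 ≠ e.2.2 ∧ e.1 ≠ e.2.2) ∧
      e.1 < 2*n+1 ∧ e.2.1 < 2*n+1 ∧ e.2.2 < 2*n+1) ∧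
    l ≠ [] ∧ ok (eV l.headI) l.tail ∧ cov l = pairSet (2*n+1) := by
  intro n hn
  induction n, hn using Nat.le_induction with
  | base =>
    refine ⟨T5, ?_, by simp [T5], ?_, ?_⟩
    · decide
    · show ok (eV (0,1,2)) _
      simp only [T5, List.tail_cons, ok_cons, ok_nil_iff, and_true]
      refine ⟨?_, ?_, ?_, ?_, ?_, ?_, ?_, ?_⟩ <;> decide
    · decide
  | succ n hn ih =>
    obtain ⟨l, hb, hne, hok, hcov⟩ := ih
    rcases l with _ | ⟨e, t⟩
    · exact absurd rfl hne
    have hc : (4 : ℕ) ≤ 2 * n := by omega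
    have hN : 2 * (n + 1) + 1 = (2 * n) + 3 := by ring
    refine ⟨e :: (t ++ stepL (2 * n)), ?_, by simp, ?_, ?_⟩
    · intro e' he'
      rcases List.mem_cons.mp he' with rfl | he'
      · have := hb e' (List.mem_cons_self); refine ⟨this.1, by omega, by omega, by omega⟩
      rcases List.mem_append.mp he' with he' | he'
      · have := hb e' (List.mem_cons_of_mem _ he'); refine ⟨this.1, by omega, by omega, by omega⟩
      · have := step_bounds hc e' he'; exact ⟨this.1, by omega, by omega, by omega⟩
    · show ok (eV e) (t ++ stepL (2 * n))
      rw [ok_append]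
      refine ⟨hok, ?_⟩
      have : cov t ∪ eV e = pairSet (2 * n + 1) := by
        rw [Finset.union_comm, ← cov_cons, hcov]
      rw [(ok_congr this), show (2*n+1) = (2*n)+1 from rfl]
      exact step_ok hc
    · show cov ((e :: t) ++ stepL (2 * n)) = _
      rw [cov_append, hcov, hN]
      exact step_cov hc


section transfer

variable {m : ℕ} [NeZero m]

def f (m : ℕ) [NeZero m] (x : ℕ) : Fin m := ⟨x % m, Nat.mod_lt _ (Nat.pos_of_ne_zero (NeZero.ne m))⟩

lemma f_val {x : ℕ} (h : x < m) : (f m x).val = x := Nat.mod_eq_of_lt h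

def F (m : ℕ) [NeZero m] (e : ℕ × ℕ × ℕ) : Fin m × Fin m × Fin m :=
  (f m e.1, f m e.2.1, f m e.2.2)

def g (m : ℕ) [NeZero m] : ℕ × ℕ → Fin m × Fin m := Prod.map (f m) (f m)

lemma edgeVerts_F (e : ℕ × ℕ × ℕ) : edgeVerts (F m e) = (eV e).image (g m) := by
  obtain ⟨x, y, z⟩ := e
  simp [edgeVerts, eV, F, g, Finset.image_insert]

lemma covered_map (l : List (ℕ × ℕ × ℕ)) :
    covered (l.map (F m)) = (cov l).image (g m) := by
  induction l with
  | nil => simp [covered, cov]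
  | cons e t ih =>
    show edgeVerts (F m e) ∪ covered (t.map (F m)) = _
    rw [ih, cov_cons, Finset.image_union, edgeVerts_F]

lemma g_injOn {S : Set (ℕ × ℕ)} (hs : ∀ p ∈ S, p.1 < m ∧ p.2 < m) :
    Set.InjOn (g m) S := by
  rintro ⟨a, b⟩ ha ⟨a', b'⟩ hb h
  have h1 := hs _ ha
  have h2 := hs _ hb
  simp only [g, Prod.map, Prod.mk.injEq] at h
  have e1 : a = a' := by
    have := congrArg Fin.val h.1
    rwa [f_val h1.1, f_val h2.1] at this
  have e2 : b = b' := by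
    have := congrArg Fin.val h.2
    rwa [f_val h1.2, f_val h2.2] at this
  simp [e1, e2]

end transfer

end Stmt13

/-- There is a nearly spanning tree in the hypergraph `H_{2n+1}`: a list of hyperedges
(cyclic triples of distinct elements) such that every edge after the first meets the set of
previously covered vertices in exactly one vertex, and which covers precisely all ordered
pairs of distinct elements of `[2n+1]` except the vertex `(2,1)` (elements 0-indexed, so
`(2,1)` is `(⟨1⟩,⟨0⟩)`). -/
theorem stmt_13 (n : ℕ) (hn : 2 ≤ n) :
    ∃ es : List (Fin (2 * n + 1) × Fin (2 * n + 1) × Fin (2 * n + 1)),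
      (∀ e ∈ es, e.1 ≠ e.2.1 ∧ e.2.1 ≠ e.2.2 ∧ e.1 ≠ e.2.2) ∧
      (∀ k : ℕ, ∀ hk : k < es.length, 0 < k →
        (edgeVerts (es.get ⟨k, hk⟩) ∩ covered (es.take k)).card = 1) ∧
      covered es =
        (Finset.univ.filter fun p : Fin (2 * n + 1) × Fin (2 * n + 1) => p.1 ≠ p.2) \
          {(⟨1, by omega⟩, ⟨0, by omega⟩)} := by
  classical
  open Stmt13 in
  obtain ⟨l, hb, hne, hok, hcov⟩ := Stmt13.build n hn
  set m := 2 * n + 1 with hm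
  have : NeZero m := ⟨by omega⟩
  have hcovb : ∀ p ∈ Stmt13.cov l, p.1 < m ∧ p.2 < m := by
    intro p hp
    rw [hcov] at hp
    obtain ⟨u, v⟩ := p
    have := Stmt13.mem_pairSet'.mp hp
    exact ⟨this.1, this.2.1⟩
  refine ⟨l.map (Stmt13.F m), ?_, ?_, ?_⟩
  · intro e' he'
    rw [List.mem_map] at he'
    obtain ⟨e, he, rfl⟩ := he'
    obtain ⟨⟨d1, d2, d3⟩, b1, b2, b3⟩ := hb e he
    refine ⟨?_, ?_, ?_⟩ <;>
      · simp only [Stmt13.F]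
        intro hcontra
        have := congrArg Fin.val hcontra
        rw [Stmt13.f_val (by omega), Stmt13.f_val (by omega)] at this
        omega
  · intro k hk hkpos
    have hkl : k < l.length := by simpa using hk
    have hget : (l.map (Stmt13.F m)).get ⟨k, hk⟩ = Stmt13.F m (l.get ⟨k, hkl⟩) := by
      simp [List.get_eq_getElem]
    have htake : (l.map (Stmt13.F m)).take k = (l.take k).map (Stmt13.F m) := by
      rw [List.map_take]
    rw [hget, htake, Stmt13.covered_map, Stmt13.edgeVerts_F]
    set e := l.get ⟨k, hkl⟩ with hedef
    have hEb : ∀ p ∈ Stmt13.eV e, p.1 < m ∧ p.2 < m := by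
      intro p hp
      obtain ⟨⟨d1, d2, d3⟩, b1, b2, b3⟩ := hb e (l.get_mem _)
      obtain ⟨x, y, z⟩ := e
      obtain ⟨u, v⟩ := p
      rcases Stmt13.mem_eV.mp hp with h | h | h <;>
        simp only [Prod.mk.injEq] at h <;> simp only at b1 b2 b3 <;> omega
    have hTb : ∀ p ∈ Stmt13.cov (l.take k), p.1 < m ∧ p.2 < m := by
      intro p hp
      apply hcovb
      have : Stmt13.cov l = Stmt13.cov (l.take k) ∪ Stmt13.cov (l.drop k) := by
        rw [← Stmt13.cov_append, List.take_append_drop]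
      rw [this]
      exact Finset.mem_union_left _ hp
    rw [← Finset.image_inter_of_injOn _ _ (Stmt13.g_injOn (by
      intro p hp
      rcases hp with h | h
      · exact hEb p (Finset.mem_coe.mp h)
      · exact hTb p (Finset.mem_coe.mp h)))]
    rw [Finset.card_image_of_injOn (Stmt13.g_injOn (by
      intro p hp
      have := Finset.mem_coe.mp hp
      exact hEb p (Finset.mem_inter.mp this).1))]
    -- now pure ℕ statement
    rcases l with _ | ⟨e0, t⟩
    · exact absurd rfl hne
    obtain ⟨k, rfl⟩ : ∃ k', k = k' + 1 := ⟨k - 1, by omega⟩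
    have hk't : k < t.length := by simpa using hkl
    have := Stmt13.ok_get hok k hk't
    have hrw : Stmt13.cov (List.take (k+1) (e0 :: t)) =
        Stmt13.cov (t.take k) ∪ Stmt13.eV e0 := by
      rw [List.take_succ_cons, Stmt13.cov_cons, Finset.union_comm]
    rw [hrw]
    exact this
  · rw [Stmt13.covered_map, hcov]
    apply Finset.ext
    rintro ⟨u, v⟩
    constructor
    · intro h
      rw [Finset.mem_image] at h
      obtain ⟨⟨i, j⟩, hij, heq⟩ := h
      have hf := Stmt13.mem_pairSet'.mp hij
      simp only [Stmt13.g, Prod.map, Prod.mk.injEq] at heq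
      rw [Finset.mem_sdiff, Finset.mem_filter]
      refine ⟨⟨Finset.mem_univ _, ?_⟩, ?_⟩
      · intro hcontra
        rw [← heq.1, ← heq.2] at hcontra
        have := congrArg Fin.val hcontra
        rw [Stmt13.f_val (by omega), Stmt13.f_val (by omega)] at this
        omega
      · intro hcontra
        rw [Finset.mem_singleton, Prod.mk.injEq] at hcontra
        have h1 : u.val = 1 := by rw [hcontra.1]
        have h2 : v.val = 0 := by rw [hcontra.2]
        rw [← heq.1] at h1
        rw [← heq.2] at h2
        rw [Stmt13.f_val (by omega)] at h1
        rw [Stmt13.f_val (by omega)] at h2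
        omega
    · intro h
      rw [Finset.mem_sdiff, Finset.mem_filter, Finset.mem_singleton] at h
      obtain ⟨⟨-, huv⟩, hpt⟩ := h
      rw [Finset.mem_image]
      refine ⟨(u.val, v.val), Stmt13.mem_pairSet'.mpr ⟨u.isLt, v.isLt, ?_, ?_⟩, ?_⟩
      · intro hcontra
        exact huv (Fin.ext hcontra)
      · rintro ⟨h1, h2⟩
        apply hpt
        rw [Prod.mk.injEq]
        exact ⟨Fin.ext (by rw [h1]), Fin.ext (by rw [h2])⟩
      · simp only [Stmt13.g, Prod.map, Prod.mk.injEq]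
        constructor <;> (apply Fin.ext; rw [Stmt13.f_val (by omega)])
end
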